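/- If a graph G on n vertices has fewer than (9/8)n edges, then G contains a vertex of degree at most one, or a vertex of degree two both of whose neighbors have degree two. -/

import Mathlib

/-- If a graph `G` on `n` vertices has fewer than `(9/8)n` edges, then `G` contains a vertex of
degree at most one, or a vertex of degree two both of whose neighbors have degree two. -/
theorem stmt_0 {V : Type*} [Fintype V] (G : SimpleGraph V) [DecidableRel G.Adj]
    (h : 8 * G.edgeFinset.card < 9 * Fintype.card V) :
    (∃ v : V, G.degree v ≤ 1) ∨
      (∃ v : V, G.degree v = 2 ∧ ∀ u ∈ G.neighborFinset v, G.degree u = 2) := by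
  classical
  by_contra hc
  push_neg at hc
  obtain ⟨h1, h2⟩ := hc
  set S := Finset.univ.filter (fun v => G.degree v = 2) with hS
  set T := Finset.univ.filter (fun v => ¬ G.degree v = 2) with hT
  have hdisj : Disjoint S T := by
    simp [hS, hT, Finset.disjoint_filter]
  have hunion : S ∪ T = Finset.univ := Finset.filter_union_filter_not_eq _ _
  have hsum : ∑ v, G.degree v = 2 * G.edgeFinset.card :=
    G.sum_degrees_eq_twice_card_edges
  have hsplit : ∑ v, G.degree v = ∑ v ∈ S, G.degree v + ∑ v ∈ T, G.degree v := by
    rw [← Finset.sum_union hdisj, hunion]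
  have hSsum : ∑ v ∈ S, G.degree v = 2 * S.card := by
    rw [Finset.sum_congr rfl (fun v hv => (Finset.mem_filter.mp hv).2)]
    simp [mul_comm]
    rfl
  have hTsum : 3 * T.card ≤ ∑ v ∈ T, G.degree v := by
    rw [mul_comm]
    refine Finset.card_nsmul_le_sum T _ 3 fun v hv => ?_
    have hv2 := (Finset.mem_filter.mp hv).2
    have := h1 v
    omega
  -- choose a neighbor of degree ≠ 2 for each degree-2 vertex
  have hf : ∀ v : V, ∃ u, G.degree v = 2 →
      (u ∈ G.neighborFinset v ∧ ¬ G.degree u = 2) := by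
    intro v
    by_cases hv : G.degree v = 2
    · obtain ⟨u, hu, hd⟩ := h2 v hv
      exact ⟨u, fun _ => ⟨hu, hd⟩⟩
    · exact ⟨v, fun h' => absurd h' hv⟩
  choose f hfp using hf
  have hcard : S.card ≤ ∑ u ∈ T, G.degree u := by
    have hmap : ∀ v ∈ S, f v ∈ T := by
      intro v hv
      have hv2 := (Finset.mem_filter.mp hv).2
      exact Finset.mem_filter.mpr ⟨Finset.mem_univ _, (hfp v hv2).2⟩
    rw [Finset.card_eq_sum_card_fiberwise hmap]
    refine Finset.sum_le_sum fun u hu => ?_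
    rw [← G.card_neighborFinset_eq_degree u]
    refine Finset.card_le_card fun v hv => ?_
    obtain ⟨hvS, hfv⟩ := Finset.mem_filter.mp hv
    have hv2 := (Finset.mem_filter.mp hvS).2
    have := (hfp v hv2).1
    rw [SimpleGraph.mem_neighborFinset] at this ⊢
    rw [← hfv]
    exact this.symm
  have hn : S.card + T.card = Fintype.card V := by
    rw [← Finset.card_univ, ← hunion, Finset.card_union_of_disjoint hdisj]
  omega
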